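/- Let P₁ and P₂ be probability measures on ℝ such that H = F_{P₁} − F_{P₂} is Lebesgue-integrable on ℝ, and let Ĥ denote its Fourier transform in the symmetric convention. Then for every ω ≠ 0, −√(2π) · i · ω · conj(Ĥ(ω)) = φ_{P₁}(ω) − φ_{P₂}(ω), where conj denotes complex conjugation; i.e. the conjugate-linear multiplier operator U defined by (ÛH)(ω) = −√(2π) i ω conj(Ĥ(ω)) carries the CDF difference F_{P₁} − F_{P₂} to the difference of spectral embeddings (φ_{P₁} − 1) − (φ_{P₂} − 1). -/

import Mathlib

open MeasureTheory Filter

/-- The cumulative distribution function of a measure on `ℝ`. -/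
noncomputable def cdfFn (P : Measure ℝ) (x : ℝ) : ℝ := (P (Set.Iic x)).toReal

/-- The characteristic function `φ_P(ω) = ∫ e^{iωx} dP(x)`. -/
noncomputable def charFn (P : Measure ℝ) (ω : ℝ) : ℂ :=
  ∫ x, Complex.exp (Complex.I * (ω : ℂ) * (x : ℂ)) ∂P

/-- The Fourier transform with the symmetric convention
`f̂(ω) = (1/√(2π)) ∫ f(x) e^{-iωx} dx`, for a real-valued function. -/
noncomputable def fourierSym (f : ℝ → ℝ) (ω : ℝ) : ℂ :=
  ((Real.sqrt (2 * Real.pi) : ℂ))⁻¹ *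
    ∫ x : ℝ, (f x : ℂ) * Complex.exp (-(Complex.I * (ω : ℂ) * (x : ℂ)))

/-- Projection of `t` onto `[-R, R]`. -/
noncomputable def prj (R t : ℝ) : ℝ := max (-R) (min t R)

lemma prj_le {R : ℝ} (hR : 0 ≤ R) (t : ℝ) : prj R t ≤ R :=
  max_le (by linarith) (min_le_right _ _)

lemma neg_le_prj (R t : ℝ) : -R ≤ prj R t := le_max_left _ _

lemma le_prj_iff {R x : ℝ} (hR : 0 ≤ R) (hx : 0 < x) (hxR : x ≤ R) (t : ℝ) :
    x ≤ prj R t ↔ x ≤ t := by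
  unfold prj
  rw [le_max_iff, le_min_iff]
  constructor
  · rintro (h | ⟨h, _⟩)
    · linarith
    · exact h
  · intro h; exact Or.inr ⟨h, hxR⟩

lemma prj_lt_iff {R x : ℝ} (hR : 0 ≤ R) (hx : x ≤ 0) (hxR : -R < x) (t : ℝ) :
    prj R t < x ↔ t < x := by
  unfold prj
  rw [max_lt_iff, min_lt_iff]
  constructor
  · rintro ⟨_, (h | h)⟩
    · exact h
    · linarith
  · intro h; exact ⟨hxR, Or.inl h⟩

lemma prj_eq_self {R t : ℝ} (h : |t| ≤ R) : prj R t = t := by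
  rw [abs_le] at h
  unfold prj
  rw [min_eq_left h.2, max_eq_right h.1]

lemma continuous_prj (R : ℝ) : Continuous (prj R) :=
  continuous_const.max (continuous_id.min continuous_const)

/-- The signed indicator kernel. -/
noncomputable def KK (s x : ℝ) : ℂ :=
  (Set.Ioc 0 s).indicator (fun _ => (1:ℂ)) x - (Set.Ioc s 0).indicator (fun _ => (1:ℂ)) x

lemma key1 {ω : ℝ} (hω : ω ≠ 0) (s : ℝ) :
    Complex.exp (Complex.I * ω * s) - 1 =
      Complex.I * ω * ∫ x : ℝ, KK s x * Complex.exp (Complex.I * ω * x) := by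
  have hc : (Complex.I * ω) ≠ 0 := by
    simp [Complex.I_ne_zero, Complex.ofReal_eq_zero, hω]
  have hmain : (∫ x : ℝ, KK s x * Complex.exp (Complex.I * ω * x)) =
      ∫ x in (0:ℝ)..s, Complex.exp (Complex.I * ω * x) := by
    rcases le_or_gt 0 s with hs | hs
    · have he : Set.Ioc s 0 = ∅ := Set.Ioc_eq_empty (by simpa using hs)
      have : (fun x : ℝ => KK s x * Complex.exp (Complex.I * ω * x)) =
          (Set.Ioc 0 s).indicator (fun x => Complex.exp (Complex.I * ω * x)) := by
        funext x
        by_cases hx : x ∈ Set.Ioc 0 s <;>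
          simp [KK, he, Set.indicator_apply, hx]
      rw [this, integral_indicator measurableSet_Ioc,
        ← intervalIntegral.integral_of_le hs]
    · have he : Set.Ioc 0 s = ∅ := Set.Ioc_eq_empty (by simpa using hs.le)
      have : (fun x : ℝ => KK s x * Complex.exp (Complex.I * ω * x)) =
          fun x => -(Set.Ioc s 0).indicator (fun x => Complex.exp (Complex.I * ω * x)) x := by
        funext x
        by_cases hx : x ∈ Set.Ioc s 0 <;>
          simp [KK, he, Set.indicator_apply, hx]
      rw [this, integral_neg, integral_indicator measurableSet_Ioc,
        ← intervalIntegral.integral_of_le hs.le, ← intervalIntegral.integral_symm]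
  rw [hmain, integral_exp_mul_complex hc]
  field_simp
  rw [Complex.ofReal_zero, mul_zero, Complex.exp_zero, mul_div_cancel_left₀ _ (Complex.ofReal_ne_zero.2 hω)]

lemma norm_exp_I_mul (ω x : ℝ) : ‖Complex.exp (Complex.I * ω * x)‖ = 1 := by
  rw [Complex.norm_exp]
  simp

lemma KK_norm_le {R : ℝ} (hR : 0 ≤ R) (t x : ℝ) :
    ‖KK (prj R t) x‖ ≤ (Set.Ioc (-R) R).indicator (fun _ => (1:ℝ)) x := by
  unfold KK
  by_cases h1 : x ∈ Set.Ioc 0 (prj R t)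
  · have h2 : x ∉ Set.Ioc (prj R t) 0 := by
      rintro ⟨h2a, h2b⟩; exact absurd h1.1 (by linarith)
    have hx : x ∈ Set.Ioc (-R) R := ⟨by linarith [h1.1], le_trans h1.2 (prj_le hR t)⟩
    simp [Set.indicator_of_mem h1, Set.indicator_of_notMem h2, Set.indicator_of_mem hx]
  · by_cases h2 : x ∈ Set.Ioc (prj R t) 0
    · have hx : x ∈ Set.Ioc (-R) R := ⟨lt_of_le_of_lt (neg_le_prj R t) h2.1, by linarith [h2.2]⟩
      simp [Set.indicator_of_notMem h1, Set.indicator_of_mem h2, Set.indicator_of_mem hx]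
    · simp only [Set.indicator_of_notMem h1, Set.indicator_of_notMem h2, sub_zero,
        norm_zero]
      exact Set.indicator_nonneg (fun _ _ => zero_le_one) x

lemma KK_measurable (R : ℝ) :
    Measurable (fun p : ℝ × ℝ => KK (prj R p.1) p.2) := by
  unfold KK
  apply Measurable.sub
  · have : (fun p : ℝ × ℝ => (Set.Ioc 0 (prj R p.1)).indicator (fun _ => (1:ℂ)) p.2) =
        Set.indicator {p : ℝ × ℝ | 0 < p.2 ∧ p.2 ≤ prj R p.1} (fun _ => (1:ℂ)) := by
      funext p
      by_cases h : 0 < p.2 ∧ p.2 ≤ prj R p.1 <;>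
        simp [Set.indicator_apply, Set.mem_Ioc, h]
    rw [this]
    apply Measurable.indicator measurable_const
    exact MeasurableSet.inter (measurableSet_lt measurable_const measurable_snd)
      (measurableSet_le measurable_snd (((continuous_prj R).measurable).comp measurable_fst))
  · have : (fun p : ℝ × ℝ => (Set.Ioc (prj R p.1) 0).indicator (fun _ => (1:ℂ)) p.2) =
        Set.indicator {p : ℝ × ℝ | prj R p.1 < p.2 ∧ p.2 ≤ 0} (fun _ => (1:ℂ)) := by
      funext p
      by_cases h : prj R p.1 < p.2 ∧ p.2 ≤ 0 <;>
        simp [Set.indicator_apply, Set.mem_Ioc, h]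
    rw [this]
    apply Measurable.indicator measurable_const
    exact MeasurableSet.inter
      (measurableSet_lt (((continuous_prj R).measurable).comp measurable_fst) measurable_snd)
      (measurableSet_le measurable_snd measurable_const)

lemma keyInt (P : Measure ℝ) [IsProbabilityMeasure P] (ω R : ℝ) (hR : 0 ≤ R) :
    Integrable (fun p : ℝ × ℝ => KK (prj R p.1) p.2 * Complex.exp (Complex.I * ω * p.2))
      (P.prod volume) := by
  have hmeas : AEStronglyMeasurable
      (fun p : ℝ × ℝ => KK (prj R p.1) p.2 * Complex.exp (Complex.I * ω * p.2))
      (P.prod volume) := by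
    apply Measurable.aestronglyMeasurable
    exact (KK_measurable R).mul
      ((Complex.measurable_exp.comp
        ((measurable_const.mul (Complex.measurable_ofReal.comp measurable_snd)))))
  have hg : Integrable (fun p : ℝ × ℝ => (Set.Ioc (-R) R).indicator (fun _ => (1:ℝ)) p.2)
      (P.prod volume) := by
    have : (fun p : ℝ × ℝ => (Set.Ioc (-R) R).indicator (fun _ => (1:ℝ)) p.2) =
        Set.indicator (Set.univ ×ˢ Set.Ioc (-R) R) (fun _ => (1:ℝ)) := by
      funext p
      by_cases h : p.2 ∈ Set.Ioc (-R) R <;>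
        simp [Set.indicator_apply, Set.mem_prod, h]
    rw [this, integrable_indicator_iff (MeasurableSet.univ.prod measurableSet_Ioc)]
    rw [integrableOn_const_iff]
    right
    rw [Measure.prod_prod]
    simp [ENNReal.mul_lt_top, measure_lt_top]
  apply hg.mono' hmeas
  filter_upwards with p
  rw [norm_mul, norm_exp_I_mul, mul_one]
  exact KK_norm_le hR p.1 p.2

/-- Per-measure truncated weight function. -/
noncomputable def gP (P : Measure ℝ) (R x : ℝ) : ℂ :=
  (Set.Ioc 0 R).indicator (fun y => ((P (Set.Ici y)).toReal : ℂ)) x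
    - (Set.Ioc (-R) 0).indicator (fun y => ((P (Set.Iio y)).toReal : ℂ)) x

lemma inner_eq (P : Measure ℝ) [IsProbabilityMeasure P] {R : ℝ} (hR : 0 ≤ R) (x : ℝ) :
    ∫ t, KK (prj R t) x ∂P = gP P R x := by
  by_cases h1 : x ∈ Set.Ioc 0 R
  · have heq : (fun t => KK (prj R t) x) =
        (Set.Ici x).indicator (fun _ => (1:ℂ)) := by
      funext t
      unfold KK
      have h2 : x ∉ Set.Ioc (prj R t) 0 := by
        rintro ⟨_, hb⟩; exact absurd h1.1 (by linarith)
      rw [Set.indicator_of_notMem h2, sub_zero]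
      by_cases ht : x ≤ t
      · have : x ∈ Set.Ioc 0 (prj R t) :=
          ⟨h1.1, (le_prj_iff hR h1.1 h1.2 t).2 ht⟩
        simp [Set.indicator_of_mem, this, Set.indicator_of_mem (Set.mem_Ici.2 ht)]
      · have : x ∉ Set.Ioc 0 (prj R t) := by
          rintro ⟨_, hb⟩
          exact ht ((le_prj_iff hR h1.1 h1.2 t).1 hb)
        simp [Set.indicator_of_notMem this,
          Set.indicator_of_notMem (fun h => ht (Set.mem_Ici.1 h))]
    rw [heq, integral_indicator_const (1:ℂ) measurableSet_Ici]
    have h2 : x ∉ Set.Ioc (-R) 0 := by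
      rintro ⟨_, hb⟩; exact absurd h1.1 (by linarith)
    unfold gP
    rw [Set.indicator_of_mem h1, Set.indicator_of_notMem h2, sub_zero]
    simp [Measure.real]
  · by_cases h2 : x ∈ Set.Ioc (-R) 0
    · have heq : (fun t => KK (prj R t) x) =
          fun t => -(Set.Iio x).indicator (fun _ => (1:ℂ)) t := by
        funext t
        unfold KK
        have h3 : x ∉ Set.Ioc 0 (prj R t) := by
          rintro ⟨ha, _⟩; exact absurd h2.2 (by linarith)
        rw [Set.indicator_of_notMem h3, zero_sub]
        by_cases ht : t < x
        · have : x ∈ Set.Ioc (prj R t) 0 :=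
            ⟨(prj_lt_iff hR h2.2 h2.1 t).2 ht, h2.2⟩
          simp [Set.indicator_of_mem this, Set.indicator_of_mem (Set.mem_Iio.2 ht)]
        · have : x ∉ Set.Ioc (prj R t) 0 := by
            rintro ⟨ha, _⟩
            exact ht ((prj_lt_iff hR h2.2 h2.1 t).1 ha)
          simp [Set.indicator_of_notMem this,
            Set.indicator_of_notMem (fun h => ht (Set.mem_Iio.1 h))]
      rw [heq, integral_neg, integral_indicator_const (1:ℂ) measurableSet_Iio]
      unfold gP
      rw [Set.indicator_of_mem h2, Set.indicator_of_notMem h1, zero_sub]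
      simp [Measure.real]
    · have heq : (fun t => KK (prj R t) x) = fun _ => (0:ℂ) := by
        funext t
        unfold KK
        have h3 : x ∉ Set.Ioc 0 (prj R t) := by
          rintro ⟨ha, hb⟩
          exact h1 ⟨ha, le_trans hb (prj_le hR t)⟩
        have h4 : x ∉ Set.Ioc (prj R t) 0 := by
          rintro ⟨ha, hb⟩
          exact h2 ⟨lt_of_le_of_lt (neg_le_prj R t) ha, hb⟩
        rw [Set.indicator_of_notMem h3, Set.indicator_of_notMem h4, sub_zero]
      rw [heq, integral_zero]
      unfold gP
      rw [Set.indicator_of_notMem h1, Set.indicator_of_notMem h2, sub_zero]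

lemma step_main (P : Measure ℝ) [IsProbabilityMeasure P] {ω : ℝ} (hω : ω ≠ 0)
    {R : ℝ} (hR : 0 ≤ R) :
    (∫ t, Complex.exp (Complex.I * ω * prj R t) ∂P) - 1 =
      Complex.I * ω * ∫ x : ℝ, gP P R x * Complex.exp (Complex.I * ω * x) := by
  have hmeas : Measurable (fun t : ℝ => Complex.exp (Complex.I * ω * prj R t)) :=
    Complex.measurable_exp.comp
      (measurable_const.mul (Complex.measurable_ofReal.comp (continuous_prj R).measurable))
  have hint_exp : Integrable (fun t : ℝ => Complex.exp (Complex.I * ω * prj R t)) P := by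
    apply (integrable_const (1:ℝ)).mono' hmeas.aestronglyMeasurable
    filter_upwards with t
    rw [norm_exp_I_mul]
  have h1 : (∫ t, Complex.exp (Complex.I * ω * prj R t) ∂P) - 1 =
      ∫ t, (Complex.exp (Complex.I * ω * prj R t) - 1) ∂P := by
    rw [integral_sub hint_exp (integrable_const 1), integral_const]
    simp
  rw [h1]
  have h2 : ∀ t : ℝ, Complex.exp (Complex.I * ω * prj R t) - 1 =
      Complex.I * ω * ∫ x : ℝ, KK (prj R t) x * Complex.exp (Complex.I * ω * x) :=
    fun t => key1 hω _
  calc ∫ t, (Complex.exp (Complex.I * ω * prj R t) - 1) ∂P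
      = ∫ t, Complex.I * ω *
          (∫ x : ℝ, KK (prj R t) x * Complex.exp (Complex.I * ω * x)) ∂P := by
        simp_rw [h2]
    _ = Complex.I * ω * ∫ t, (∫ x : ℝ, KK (prj R t) x * Complex.exp (Complex.I * ω * x)) ∂P :=
        integral_const_mul _ _
    _ = Complex.I * ω *
          ∫ x : ℝ, (∫ t, KK (prj R t) x * Complex.exp (Complex.I * ω * x) ∂P) := by
        rw [integral_integral_swap (keyInt P ω R hR)]
    _ = Complex.I * ω * ∫ x : ℝ, gP P R x * Complex.exp (Complex.I * ω * x) := by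
        congr 1
        refine integral_congr_ae (Filter.Eventually.of_forall fun x => ?_)
        show (∫ t, KK (prj R t) x * Complex.exp (Complex.I * ω * x) ∂P) = _
        rw [integral_mul_const, inner_eq P hR x]

lemma toReal_Ici (P : Measure ℝ) [IsProbabilityMeasure P] (x : ℝ) :
    (P (Set.Ici x)).toReal = 1 - (P (Set.Iio x)).toReal := by
  have h : P (Set.Ici x) = P Set.univ - P (Set.Iio x) := by
    rw [← Set.compl_Iio, measure_compl measurableSet_Iio (measure_ne_top P _)]
  rw [h, measure_univ, ENNReal.toReal_sub_of_le (prob_le_one) (by simp)]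
  simp

lemma g_diff (P₁ P₂ : Measure ℝ) [IsProbabilityMeasure P₁] [IsProbabilityMeasure P₂]
    {R : ℝ} (hR : 0 ≤ R) (x : ℝ) :
    gP P₁ R x - gP P₂ R x =
      -(Set.Ioc (-R) R).indicator
        (fun y => (((P₁ (Set.Iio y)).toReal - (P₂ (Set.Iio y)).toReal : ℝ) : ℂ)) x := by
  unfold gP
  by_cases h1 : x ∈ Set.Ioc 0 R
  · have h2 : x ∉ Set.Ioc (-R) 0 := by rintro ⟨_, hb⟩; exact absurd h1.1 (by linarith)
    have h3 : x ∈ Set.Ioc (-R) R := ⟨by linarith [h1.1], h1.2⟩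
    rw [Set.indicator_of_mem h1, Set.indicator_of_mem h1, Set.indicator_of_notMem h2,
      Set.indicator_of_notMem h2, Set.indicator_of_mem h3, toReal_Ici, toReal_Ici]
    push_cast
    ring
  · by_cases h2 : x ∈ Set.Ioc (-R) 0
    · have h3 : x ∈ Set.Ioc (-R) R := ⟨h2.1, by linarith [h2.2]⟩
      rw [Set.indicator_of_notMem h1, Set.indicator_of_notMem h1,
        Set.indicator_of_mem h2, Set.indicator_of_mem h2, Set.indicator_of_mem h3]
      push_cast
      ring
    · have h3 : x ∉ Set.Ioc (-R) R := by
        rintro ⟨ha, hb⟩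
        rcases le_or_gt x 0 with h | h
        · exact h2 ⟨ha, h⟩
        · exact h1 ⟨h, hb⟩
      rw [Set.indicator_of_notMem h1, Set.indicator_of_notMem h1,
        Set.indicator_of_notMem h2, Set.indicator_of_notMem h2,
        Set.indicator_of_notMem h3]
      simp

lemma gP_exp_integrable (P : Measure ℝ) [IsProbabilityMeasure P] (ω : ℝ)
    {R : ℝ} (hR : 0 ≤ R) :
    Integrable (fun x : ℝ => gP P R x * Complex.exp (Complex.I * ω * x)) volume := by
  have h := (keyInt P ω R hR).integral_prod_right
  apply h.congr
  filter_upwards with x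
  show (∫ t, KK (prj R t) x * Complex.exp (Complex.I * ω * x) ∂P) = _
  rw [integral_mul_const, inner_eq P hR x]

lemma step_diff (P₁ P₂ : Measure ℝ) [IsProbabilityMeasure P₁] [IsProbabilityMeasure P₂]
    {ω : ℝ} (hω : ω ≠ 0) {R : ℝ} (hR : 0 ≤ R) :
    ((∫ t, Complex.exp (Complex.I * ω * prj R t) ∂P₁) - 1) -
      ((∫ t, Complex.exp (Complex.I * ω * prj R t) ∂P₂) - 1) =
      -(Complex.I * ω) * ∫ x : ℝ, (Set.Ioc (-R) R).indicator
          (fun y => (((P₁ (Set.Iio y)).toReal - (P₂ (Set.Iio y)).toReal : ℝ) : ℂ)) x *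
        Complex.exp (Complex.I * ω * x) := by
  rw [step_main P₁ hω hR, step_main P₂ hω hR, ← mul_sub,
    ← integral_sub (gP_exp_integrable P₁ ω hR) (gP_exp_integrable P₂ ω hR)]
  have : ∀ x : ℝ, gP P₁ R x * Complex.exp (Complex.I * ω * x) -
      gP P₂ R x * Complex.exp (Complex.I * ω * x) =
      -((Set.Ioc (-R) R).indicator
          (fun y => (((P₁ (Set.Iio y)).toReal - (P₂ (Set.Iio y)).toReal : ℝ) : ℂ)) x *
        Complex.exp (Complex.I * ω * x)) := by
    intro x
    rw [← sub_mul, g_diff P₁ P₂ hR x]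
    ring
  simp_rw [this, integral_neg]
  ring

lemma ae_no_atom (P : Measure ℝ) [IsProbabilityMeasure P] :
    ∀ᵐ x ∂(volume : Measure ℝ), P {x} = 0 := by
  have hc : Set.Countable {t : ℝ | 0 < P {a : ℝ | a = t}} :=
    Measure.countable_meas_level_set_pos (measurable_id (α := ℝ))
  have hc2 : Set.Countable {t : ℝ | P {t} ≠ 0} := by
    apply hc.mono
    intro t ht
    simp only [Set.mem_setOf_eq] at ht ⊢
    have : {a : ℝ | a = t} = {t} := Set.setOf_eq_eq_singleton
    rw [this]
    exact pos_iff_ne_zero.2 ht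
  rw [ae_iff]
  exact hc2.measure_zero _

lemma ae_Iio_eq (P₁ P₂ : Measure ℝ) [IsProbabilityMeasure P₁] [IsProbabilityMeasure P₂]
    (H : ℝ → ℝ) (hH : ∀ x, H x = cdfFn P₁ x - cdfFn P₂ x) :
    (fun x => (P₁ (Set.Iio x)).toReal - (P₂ (Set.Iio x)).toReal) =ᵐ[(volume : Measure ℝ)] H := by
  filter_upwards [ae_no_atom P₁, ae_no_atom P₂] with x h1 h2
  have e1 : P₁ (Set.Iio x) = P₁ (Set.Iic x) := measure_congr (Iio_ae_eq_Iic' h1)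
  have e2 : P₂ (Set.Iio x) = P₂ (Set.Iic x) := measure_congr (Iio_ae_eq_Iic' h2)
  rw [hH x, e1, e2]
  rfl

lemma lim1 (P : Measure ℝ) [IsProbabilityMeasure P] (ω : ℝ) :
    Tendsto (fun n : ℕ => ∫ t, Complex.exp (Complex.I * ω * prj n t) ∂P) atTop
      (nhds (charFn P ω)) := by
  unfold charFn
  apply tendsto_integral_of_dominated_convergence (fun _ => (1:ℝ))
  · intro n
    exact (Complex.measurable_exp.comp
      (measurable_const.mul
        (Complex.measurable_ofReal.comp (continuous_prj _).measurable))).aestronglyMeasurable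
  · exact integrable_const 1
  · intro n
    filter_upwards with t
    rw [norm_exp_I_mul]
  · filter_upwards with t
    apply tendsto_const_nhds.congr'
    filter_upwards [eventually_ge_atTop ⌈|t|⌉₊] with n hn
    rw [prj_eq_self]
    exact le_trans (Nat.le_ceil _) (by exact_mod_cast hn)

lemma lim2 {H : ℝ → ℝ} (hInt : Integrable H (volume : Measure ℝ)) (ω : ℝ) :
    Tendsto (fun n : ℕ => ∫ x : ℝ, (Set.Ioc (-(n:ℝ)) n).indicator (fun y => (H y : ℂ)) x *
        Complex.exp (Complex.I * ω * x)) atTop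
      (nhds (∫ x : ℝ, (H x : ℂ) * Complex.exp (Complex.I * ω * x))) := by
  have hHc : AEStronglyMeasurable (fun x => (H x : ℂ)) (volume : Measure ℝ) :=
    Complex.continuous_ofReal.comp_aestronglyMeasurable hInt.1
  apply tendsto_integral_of_dominated_convergence (fun x => ‖H x‖)
  · intro n
    exact (hHc.indicator measurableSet_Ioc).mul
      (Complex.measurable_exp.comp
        (measurable_const.mul Complex.measurable_ofReal)).aestronglyMeasurable
  · exact hInt.norm
  · intro n
    filter_upwards with x
    rw [norm_mul, norm_exp_I_mul, mul_one]
    by_cases h : x ∈ Set.Ioc (-(n:ℝ)) n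
    · rw [Set.indicator_of_mem h]
      simp
    · rw [Set.indicator_of_notMem h]
      simp
  · filter_upwards with x
    apply Tendsto.mul _ tendsto_const_nhds
    apply tendsto_const_nhds.congr'
    filter_upwards [eventually_ge_atTop (⌈|x|⌉₊ + 1)] with n hn
    have hx : |x| < (n:ℝ) := by
      have h1 : |x| ≤ (⌈|x|⌉₊ : ℝ) := Nat.le_ceil _
      have h2 : (⌈|x|⌉₊ : ℝ) + 1 ≤ (n:ℝ) := by exact_mod_cast hn
      linarith
    rw [abs_lt] at hx
    have hmem : x ∈ Set.Ioc (-(n:ℝ)) n := ⟨by linarith [hx.1], hx.2.le⟩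
    rw [Set.indicator_of_mem hmem]

/-- **The CDF–spectral multiplier identity.**
If `H = F_{P₁} - F_{P₂}` is Lebesgue integrable, then for every `ω ≠ 0`,
`-√(2π) · i · ω · conj(Ĥ(ω)) = φ_{P₁}(ω) - φ_{P₂}(ω)`:
the conjugate-linear multiplier operator `U` defined by
`(ÛH)(ω) = -√(2π) i ω conj(Ĥ(ω))` carries the CDF difference `F_{P₁} - F_{P₂}` to the
difference of spectral embeddings `(φ_{P₁} - 1) - (φ_{P₂} - 1)`. -/
theorem multiplier_carries_cdf_to_spectral
    (P₁ P₂ : Measure ℝ) [IsProbabilityMeasure P₁] [IsProbabilityMeasure P₂]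
    (H : ℝ → ℝ) (hH : ∀ x, H x = cdfFn P₁ x - cdfFn P₂ x)
    (hInt : Integrable H (volume : Measure ℝ)) :
    ∀ ω : ℝ, ω ≠ 0 →
      -(Real.sqrt (2 * Real.pi) : ℂ) * Complex.I * (ω : ℂ) *
          (starRingEnd ℂ) (fourierSym H ω) =
        (charFn P₁ ω - 1) - (charFn P₂ ω - 1) := by
  intro ω hω
  -- Main identity
  have key : (charFn P₁ ω - 1) - (charFn P₂ ω - 1) =
      -(Complex.I * ω) * ∫ x : ℝ, (H x : ℂ) * Complex.exp (Complex.I * ω * x) := by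
    have hT1 : Tendsto (fun n : ℕ =>
        ((∫ t, Complex.exp (Complex.I * ω * prj n t) ∂P₁) - 1) -
        ((∫ t, Complex.exp (Complex.I * ω * prj n t) ∂P₂) - 1)) atTop
        (nhds ((charFn P₁ ω - 1) - (charFn P₂ ω - 1))) :=
      ((lim1 P₁ ω).sub_const 1).sub ((lim1 P₂ ω).sub_const 1)
    have hT2 : Tendsto (fun n : ℕ =>
        ((∫ t, Complex.exp (Complex.I * ω * prj n t) ∂P₁) - 1) -
        ((∫ t, Complex.exp (Complex.I * ω * prj n t) ∂P₂) - 1)) atTop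
        (nhds (-(Complex.I * ω) * ∫ x : ℝ, (H x : ℂ) * Complex.exp (Complex.I * ω * x))) := by
      have heq : ∀ n : ℕ,
          ((∫ t, Complex.exp (Complex.I * ω * prj n t) ∂P₁) - 1) -
          ((∫ t, Complex.exp (Complex.I * ω * prj n t) ∂P₂) - 1) =
          -(Complex.I * ω) * ∫ x : ℝ, (Set.Ioc (-(n:ℝ)) n).indicator
              (fun y => (H y : ℂ)) x * Complex.exp (Complex.I * ω * x) := by
        intro n
        rw [step_diff P₁ P₂ hω (Nat.cast_nonneg n)]
        congr 1
        apply integral_congr_ae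
        filter_upwards [ae_Iio_eq P₁ P₂ H hH] with x hx
        congr 1
        by_cases h : x ∈ Set.Ioc (-(n:ℝ)) n
        · rw [Set.indicator_of_mem h, Set.indicator_of_mem h, hx]
        · rw [Set.indicator_of_notMem h, Set.indicator_of_notMem h]
      simp_rw [heq]
      exact (lim2 hInt ω).const_mul _
    exact tendsto_nhds_unique hT1 hT2
  -- Conjugate of the Fourier transform
  have hconj : (starRingEnd ℂ) (fourierSym H ω) =
      ((Real.sqrt (2 * Real.pi) : ℂ))⁻¹ *
        ∫ x : ℝ, (H x : ℂ) * Complex.exp (Complex.I * ω * x) := by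
    unfold fourierSym
    rw [map_mul, map_inv₀, Complex.conj_ofReal, ← integral_conj]
    congr 1
    refine integral_congr_ae (Filter.Eventually.of_forall fun x => ?_)
    show (starRingEnd ℂ) ((H x : ℂ) * Complex.exp (-(Complex.I * ω * x))) =
      (H x : ℂ) * Complex.exp (Complex.I * ω * x)
    rw [map_mul, Complex.conj_ofReal, ← Complex.exp_conj]
    congr 2
    simp [Complex.conj_I]
  rw [hconj, key]
  have hs : ((Real.sqrt (2 * Real.pi) : ℝ) : ℂ) ≠ 0 := by
    rw [Complex.ofReal_ne_zero]
    exact ne_of_gt (Real.sqrt_pos.2 (by positivity))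
  calc -(Real.sqrt (2 * Real.pi) : ℂ) * Complex.I * ω *
        (((Real.sqrt (2 * Real.pi) : ℝ) : ℂ)⁻¹ *
          ∫ x : ℝ, (H x : ℂ) * Complex.exp (Complex.I * ω * x))
      = ((Real.sqrt (2 * Real.pi) : ℂ) * ((Real.sqrt (2 * Real.pi) : ℝ) : ℂ)⁻¹) *
        (-(Complex.I * ω) * ∫ x : ℝ, (H x : ℂ) * Complex.exp (Complex.I * ω * x)) := by ring
    _ = -(Complex.I * ω) * ∫ x : ℝ, (H x : ℂ) * Complex.exp (Complex.I * ω * x) := by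
        rw [mul_inv_cancel₀ hs, one_mul]
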